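/- For 𝔤 = 𝔰𝔩_n and V = ℂⁿ its vector representation, the tensor power V^{⊗n} is a small 𝔤-module: for no root α of 𝔰𝔩_n is 2α a weight of V^{⊗n}. -/

import Mathlib

/-- for `𝔤 = 𝔰𝔩_n` and `V = ℂⁿ` its vector representation, `V^{⊗n}` is
small: for no root `θ_i − θ_j` (`i ≠ j`) is `2(θ_i − θ_j)` a weight of `V^{⊗n}`.
The weights of `V^{⊗n}` are the functionals `x ↦ Σ_k x(idx k)` (for `idx : Fin n → Fin n`)
restricted to the trace-zero hyperplane, and `2(θ_i − θ_j)` is `x ↦ 2(x i − x j)`. -/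
theorem stmt11 (n : ℕ) (i j : Fin n) (hij : i ≠ j) :
    ¬ ∃ idx : Fin n → Fin n,
        ∀ x : Fin n → ℂ, (∑ k, x k) = 0 →
          (∑ k, x (idx k)) = 2 * (x i - x j) := by
  rintro ⟨idx, h⟩
  have hn : (n : ℂ) ≠ 0 := Nat.cast_ne_zero.mpr i.pos.ne'
  set x : Fin n → ℂ := fun m => (if m = j then 1 else 0) - 1 / n with hx
  have htr : (∑ k, x k) = 0 := by
    simp [hx, Finset.sum_sub_distrib, Finset.sum_ite_eq', Finset.card_univ]
    field_simp
    norm_num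
  have key := h x htr
  have hxi : x i = 0 - 1 / n := by simp [hx, hij]
  have hxj : x j = 1 - 1 / n := by simp [hx]
  rw [hxi, hxj] at key
  have hL : (∑ k, x (idx k))
      = ((Finset.univ.filter (fun k => idx k = j)).card : ℂ) - 1 := by
    simp [hx, Finset.sum_sub_distrib, Finset.sum_boole, Finset.card_univ]
    field_simp
  rw [hL] at key
  have : ((Finset.univ.filter (fun k => idx k = j)).card : ℂ) + 1 = 0 := by
    ring_nf at key ⊢
    linear_combination key
  have h2 : (((Finset.univ.filter (fun k => idx k = j)).card + 1 : ℕ) : ℂ) = 0 := by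
    push_cast; exact this
  exact Nat.succ_ne_zero _ (Nat.cast_eq_zero.mp h2)
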